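/- arXiv:2506.21264 — 7 statements merged into one kernel-verified Lean document; each statement's English description precedes it below -/
import Mathlib

section
/- Let E and F be Banach spaces, T : E → F a bounded linear operator, and L ⊆ E a closed subspace. If T has the Kato property for L (i.e., for every closed finite-codimensional subspace W of E containing L and every ε > 0 there exists u ∈ W \ L with ‖T u‖ ≤ ε ‖Q_L u‖, where Q_L : E → E/L is the quotient map), then the induced operator T̃_L : E/L → F/cl(T(L)), defined by T̃_L(Q_L u) = Q_{cl(T L)}(T u), has the Kato property (for the zero subspace). -/
open Submodule Topology TopologicalSpace

/-- `T` has the Kato property for the closed subspace `L`: for every closed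
finite-codimensional subspace `W ⊇ L` and every `ε > 0` there is `u ∈ W \ L`
with `‖T u‖ ≤ ε ‖Q_L u‖`. -/
def HasKatoPropFor {E F : Type*} [SeminormedAddCommGroup E] [NormedSpace ℝ E]
    [SeminormedAddCommGroup F] [NormedSpace ℝ F]
    (T : E →L[ℝ] F) (L : Submodule ℝ E) : Prop :=
  ∀ W : Submodule ℝ E, IsClosed (W : Set E) → L ≤ W →
    FiniteDimensional ℝ (E ⧸ W) → ∀ ε : ℝ, 0 < ε →
      ∃ u ∈ W, u ∉ L ∧ ‖T u‖ ≤ ε * ‖L.mkQ u‖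

/-- `T` has the Kato property (for the zero subspace). -/
def HasKatoProp {E F : Type*} [SeminormedAddCommGroup E] [NormedSpace ℝ E]
    [SeminormedAddCommGroup F] [NormedSpace ℝ F] (T : E →L[ℝ] F) : Prop :=
  ∀ W : Submodule ℝ E, IsClosed (W : Set E) →
    FiniteDimensional ℝ (E ⧸ W) → ∀ ε : ℝ, 0 < ε →
      ∃ u ∈ W, u ≠ 0 ∧ ‖T u‖ ≤ ε * ‖u‖

/-- `R` is an operator range in `E`: the image of a bounded linear operator
from some Banach space. -/
def IsOperatorRange {E : Type*} [NormedAddCommGroup E] [NormedSpace ℝ E]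
    (R : Submodule ℝ E) : Prop :=
  ∃ (G : Type) (_ : NormedAddCommGroup G) (_ : NormedSpace ℝ G) (_ : CompleteSpace G)
    (A : G →L[ℝ] E), LinearMap.range (A : G →ₗ[ℝ] E) = R

/-- A proper dense operator range: a dense operator range of infinite codimension. -/
def IsProperDenseOperatorRange {E : Type*} [NormedAddCommGroup E] [NormedSpace ℝ E]
    (R : Submodule ℝ E) : Prop :=
  IsOperatorRange R ∧ Dense (R : Set E) ∧ ¬ FiniteDimensional ℝ (E ⧸ R)

/-- `E` has an infinite-dimensional separable quotient. -/
def HasSepQuotient (E : Type*) [NormedAddCommGroup E] [NormedSpace ℝ E] : Prop :=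
  ∃ X : Submodule ℝ E, IsClosed (X : Set E) ∧
    TopologicalSpace.SeparableSpace (E ⧸ X) ∧ ¬ FiniteDimensional ℝ (E ⧸ X)

/-- A normalized basic sequence: norm-one terms and uniformly bounded basis
projections (so it is a Schauder basis of its closed linear span). -/
def IsNormalizedBasicSeq {V : Type*} [SeminormedAddCommGroup V] [NormedSpace ℝ V]
    (v : ℕ → V) : Prop :=
  (∀ n, ‖v n‖ = 1) ∧
  ∃ C : ℝ, 0 < C ∧ ∀ (a : ℕ → ℝ) (m n : ℕ), m ≤ n →
    ‖∑ i ∈ Finset.range m, a i • v i‖ ≤ C * ‖∑ i ∈ Finset.range n, a i • v i‖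

/-- `u` is a block sequence of `z`: each `u n` is a finite linear combination of
the `z i` over consecutive disjoint increasing index blocks. -/
def IsBlockSeq {E : Type*} [AddCommMonoid E] [Module ℝ E] (z u : ℕ → E) : Prop :=
  ∃ (p : ℕ → ℕ) (a : ℕ → ℝ), StrictMono p ∧
    ∀ n, u n = ∑ i ∈ Finset.Ico (p n) (p (n + 1)), a i • z i

/-- The restriction to the subspace `X` of the canonical quotient map `E → E ⧸ Y`,
as a continuous linear map. -/
noncomputable def quotRestrict {E : Type*} [NormedAddCommGroup E] [NormedSpace ℝ E]
    (X Y : Submodule ℝ E) : ↥X →L[ℝ] E ⧸ Y :=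
  { toLinearMap := Y.mkQ.comp X.subtype,
    cont := continuous_quot_mk.comp continuous_subtype_val }

theorem stmt0 {E F : Type*} [NormedAddCommGroup E] [NormedSpace ℝ E] [CompleteSpace E]
    [NormedAddCommGroup F] [NormedSpace ℝ F] [CompleteSpace F]
    (T : E →L[ℝ] F) (L : Submodule ℝ E) (hL : IsClosed (L : Set E))
    (hT : HasKatoPropFor T L)
    (S : (E ⧸ L) →L[ℝ] (F ⧸ (L.map (T : E →ₗ[ℝ] F)).topologicalClosure))
    (hS : ∀ u : E, S (L.mkQ u) = ((L.map (T : E →ₗ[ℝ] F)).topologicalClosure).mkQ (T u)) :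
    HasKatoProp S := by
  intro W hWclosed hWfd ε hε
  set W' : Submodule ℝ E := W.comap L.mkQ with hW'
  have hW'closed : IsClosed (W' : Set E) := hWclosed.preimage continuous_quot_mk
  have hLW' : L ≤ W' := fun x hx => by
    simp [hW', Submodule.mem_comap, Submodule.mkQ_apply,
      (Submodule.Quotient.mk_eq_zero L).mpr hx]
  have hfd : FiniteDimensional ℝ (E ⧸ W') := by
    let f : E →ₗ[ℝ] (E ⧸ L) ⧸ W := W.mkQ.comp L.mkQ
    have hker : W' ≤ LinearMap.ker f := fun x hx => by
      simpa [f, Submodule.Quotient.mk_eq_zero, hW', Submodule.mem_comap] using hx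
    have hker' : LinearMap.ker f ≤ W' := fun x hx => by
      simpa [f, Submodule.Quotient.mk_eq_zero, hW', Submodule.mem_comap] using hx
    have hinj : Function.Injective (W'.liftQ f hker) := by
      rw [← LinearMap.ker_eq_bot]
      exact Submodule.ker_liftQ_eq_bot _ _ _ hker'
    exact FiniteDimensional.of_injective (W'.liftQ f hker) hinj
  obtain ⟨u, huW', huL, hnorm⟩ := hT W' hW'closed hLW' hfd ε hε
  refine ⟨L.mkQ u, huW', ?_, ?_⟩
  · simpa [Submodule.Quotient.mk_eq_zero] using huL
  · calc ‖S (L.mkQ u)‖ = ‖((L.map (T : E →ₗ[ℝ] F)).topologicalClosure).mkQ (T u)‖ := by rw [hS]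
      _ ≤ ‖T u‖ := Submodule.Quotient.norm_mk_le _ _
      _ ≤ ε * ‖L.mkQ u‖ := hnorm
end

section
/- Let E and F be Banach spaces, T : E → F a bounded linear operator, and L ⊆ E a closed subspace. Suppose there exist a sequence ε_n of positive reals converging to 0 and a sequence u_n ∈ E \ L such that the sequence Q_L(u_n) is a normalized basic sequence in E/L and ‖T u_n‖ ≤ ε_n for all n. Then T has the Kato property for L. -/
open Submodule Topology TopologicalSpace

private def coefExt (N d : ℕ) (g : Fin (d + 1) → ℝ) : ℕ → ℝ :=
  fun n => if h : N ≤ n ∧ n < N + (d + 1) then g ⟨n - N, by omega⟩ else 0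

private lemma coefExt_of_lt {N d : ℕ} {g : Fin (d + 1) → ℝ} {n : ℕ} (h : n < N) :
    coefExt N d g n = 0 := by
  rw [coefExt, dif_neg]; omega

private lemma coefExt_of_ge {N d : ℕ} {g : Fin (d + 1) → ℝ} {n : ℕ} (h : N + (d + 1) ≤ n) :
    coefExt N d g n = 0 := by
  rw [coefExt, dif_neg]; omega

private lemma coefExt_add {N d : ℕ} (g : Fin (d + 1) → ℝ) (j : Fin (d + 1)) :
    coefExt N d g (N + j) = g j := by
  rw [coefExt, dif_pos ⟨Nat.le_add_right _ _, by omega⟩]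
  congr 1
  exact Fin.ext (by simp)

private lemma sum_coefExt_smul {V : Type*} [AddCommMonoid V] [Module ℝ V]
    (N d : ℕ) (g : Fin (d + 1) → ℝ) (w : ℕ → V) :
    ∑ i ∈ Finset.range (N + (d + 1)), coefExt N d g i • w i
      = ∑ j : Fin (d + 1), g j • w (N + j) := by
  rw [Finset.range_eq_Ico,
    ← Finset.sum_Ico_consecutive _ (Nat.zero_le N) (Nat.le_add_right N (d + 1))]
  have h1 : ∑ i ∈ Finset.Ico 0 N, coefExt N d g i • w i = 0 :=
    Finset.sum_eq_zero fun i hi => by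
      rw [coefExt_of_lt (Finset.mem_Ico.mp hi).2, zero_smul]
  rw [h1, zero_add, Finset.sum_Ico_eq_sum_range]
  have h2 : N + (d + 1) - N = d + 1 := by omega
  rw [h2, ← Fin.sum_univ_eq_sum_range (fun i => coefExt N d g (N + i) • w (N + i))]
  exact Finset.sum_congr rfl fun j _ => by rw [coefExt_add]

theorem stmt1 {E F : Type*} [NormedAddCommGroup E] [NormedSpace ℝ E] [CompleteSpace E]
    [NormedAddCommGroup F] [NormedSpace ℝ F] [CompleteSpace F]
    (T : E →L[ℝ] F) (L : Submodule ℝ E) (hL : IsClosed (L : Set E))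
    (ε : ℕ → ℝ) (hε : ∀ n, 0 < ε n) (hε0 : Filter.Tendsto ε Filter.atTop (nhds 0))
    (u : ℕ → E) (hu : ∀ n, u n ∉ L)
    (hb : IsNormalizedBasicSeq (fun n => L.mkQ (u n)))
    (hTu : ∀ n, ‖T (u n)‖ ≤ ε n) :
    HasKatoPropFor T L := by
  intro W hWc hLW hWfd ε' hε'
  obtain ⟨hnorm, C, hC, hCb⟩ := hb
  set v : ℕ → E ⧸ L := fun n => L.mkQ (u n) with hv
  set d := Module.finrank ℝ (E ⧸ W) with hd
  have hCne : C ≠ 0 := hC.ne'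
  have hdne : ((d : ℝ) + 1) ≠ 0 := by positivity
  set δ : ℝ := ε' / (2 * C * ((d : ℝ) + 1)) with hδdef
  have hδ : 0 < δ := by positivity
  obtain ⟨N, hN⟩ := Filter.eventually_atTop.mp (hε0.eventually (gt_mem_nhds hδ))
  have hdep : ¬ LinearIndependent ℝ (fun j : Fin (d + 1) => W.mkQ (u (N + j))) := by
    intro h
    have := h.fintype_card_le_finrank
    simp only [Fintype.card_fin] at this
    omega
  obtain ⟨g, hg0, i₀, hi₀⟩ := Fintype.not_linearIndependent_iff.mp hdep
  set a : ℕ → ℝ := coefExt N d g with ha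
  set x : E := ∑ i ∈ Finset.range (N + (d + 1)), a i • u i with hx
  have hxW : x ∈ W := by
    have hq : W.mkQ x = 0 := by
      rw [hx, map_sum]
      simp_rw [map_smul]
      rw [ha, sum_coefExt_smul N d g (fun n => W.mkQ (u n))]
      exact hg0
    rwa [Submodule.mkQ_apply, Submodule.Quotient.mk_eq_zero] at hq
  have hS : ∀ m : ℕ, L.mkQ (∑ i ∈ Finset.range m, a i • u i)
      = ∑ i ∈ Finset.range m, a i • v i := by
    intro m
    rw [map_sum]; simp_rw [map_smul]; rfl
  have hSx : L.mkQ x = ∑ i ∈ Finset.range (N + (d + 1)), a i • v i := hS _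
  have hcoef : ∀ j, |a j| ≤ 2 * C * ‖L.mkQ x‖ := by
    intro j
    by_cases hj : j < N + (d + 1)
    · have h1 : ‖∑ i ∈ Finset.range (j + 1), a i • v i‖ ≤ C * ‖L.mkQ x‖ := by
        rw [hSx]; exact hCb a (j + 1) (N + (d + 1)) hj
      have h2 : ‖∑ i ∈ Finset.range j, a i • v i‖ ≤ C * ‖L.mkQ x‖ := by
        rw [hSx]; exact hCb a j (N + (d + 1)) (by omega)
      have h3 : a j • v j = (∑ i ∈ Finset.range (j + 1), a i • v i)
          - ∑ i ∈ Finset.range j, a i • v i := by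
        rw [Finset.sum_range_succ]; abel
      calc |a j| = ‖a j • v j‖ := by
              rw [norm_smul, Real.norm_eq_abs, hnorm j, mul_one]
        _ = ‖(∑ i ∈ Finset.range (j + 1), a i • v i)
              - ∑ i ∈ Finset.range j, a i • v i‖ := by rw [h3]
        _ ≤ ‖∑ i ∈ Finset.range (j + 1), a i • v i‖
              + ‖∑ i ∈ Finset.range j, a i • v i‖ := norm_sub_le _ _
        _ ≤ C * ‖L.mkQ x‖ + C * ‖L.mkQ x‖ := add_le_add h1 h2
        _ = 2 * C * ‖L.mkQ x‖ := by ring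
    · rw [ha, coefExt_of_ge (by omega), abs_zero]
      positivity
  have hqx : L.mkQ x ≠ 0 := by
    intro h0
    have hb1 := hcoef (N + i₀)
    rw [h0, norm_zero, mul_zero, ha, coefExt_add] at hb1
    exact hi₀ (abs_nonpos_iff.mp hb1)
  have hxL : x ∉ L := fun h =>
    hqx (by rwa [Submodule.mkQ_apply, Submodule.Quotient.mk_eq_zero])
  refine ⟨x, hxW, hxL, ?_⟩
  have h1 : ‖T x‖ ≤ ∑ i ∈ Finset.range (N + (d + 1)), |a i| * ε i := by
    rw [hx, map_sum]
    refine (norm_sum_le _ _).trans (Finset.sum_le_sum fun i _ => ?_)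
    rw [map_smul, norm_smul, Real.norm_eq_abs]
    exact mul_le_mul_of_nonneg_left (hTu i) (abs_nonneg _)
  have h2 : ∀ i, |a i| * ε i ≤ |a i| * δ := by
    intro i
    by_cases hi : N ≤ i
    · exact mul_le_mul_of_nonneg_left (hN i hi).le (abs_nonneg _)
    · rw [ha, coefExt_of_lt (by omega), abs_zero, zero_mul, zero_mul]
  have h3 : ∑ i ∈ Finset.range (N + (d + 1)), |a i|
      ≤ ((d : ℝ) + 1) * (2 * C * ‖L.mkQ x‖) := by
    have heq : ∑ i ∈ Finset.range (N + (d + 1)), |a i|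
        = ∑ i ∈ Finset.Ico N (N + (d + 1)), |a i| := by
      rw [Finset.range_eq_Ico,
        ← Finset.sum_Ico_consecutive _ (Nat.zero_le N) (Nat.le_add_right N (d + 1))]
      have hz : ∑ i ∈ Finset.Ico 0 N, |a i| = 0 :=
        Finset.sum_eq_zero fun i hi => by
          rw [ha, coefExt_of_lt (Finset.mem_Ico.mp hi).2, abs_zero]
      rw [hz, zero_add]
    rw [heq]
    calc ∑ i ∈ Finset.Ico N (N + (d + 1)), |a i|
        ≤ (Finset.Ico N (N + (d + 1))).card • (2 * C * ‖L.mkQ x‖) :=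
          Finset.sum_le_card_nsmul _ _ _ fun i _ => hcoef i
      _ = ((d : ℝ) + 1) * (2 * C * ‖L.mkQ x‖) := by
          rw [Nat.card_Ico, nsmul_eq_mul]
          have hcard : N + (d + 1) - N = d + 1 := by omega
          rw [hcard]
          push_cast
          ring
  calc ‖T x‖ ≤ ∑ i ∈ Finset.range (N + (d + 1)), |a i| * ε i := h1
    _ ≤ ∑ i ∈ Finset.range (N + (d + 1)), |a i| * δ :=
        Finset.sum_le_sum fun i _ => h2 i
    _ = (∑ i ∈ Finset.range (N + (d + 1)), |a i|) * δ := by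
        rw [Finset.sum_mul]
    _ ≤ ((d : ℝ) + 1) * (2 * C * ‖L.mkQ x‖) * δ :=
        mul_le_mul_of_nonneg_right h3 hδ.le
    _ = ε' * ‖L.mkQ x‖ := by
        rw [hδdef]; field_simp
end

section
/- Let E and F be Banach spaces, T : E → F a bounded linear operator whose range T(E) is not closed, and M ⊆ T(E) a closed subspace of F. Then T has the Kato property for the subspace T⁻¹(M). -/
open Submodule Topology TopologicalSpace

/-- The operator induced by `T` between quotients, as a continuous linear map. -/
noncomputable def inducedQuotCLM {E F : Type*} [NormedAddCommGroup E] [NormedSpace ℝ E]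
    [NormedAddCommGroup F] [NormedSpace ℝ F] (T : E →L[ℝ] F) (L : Submodule ℝ E)
    (M : Submodule ℝ F) (h : L ≤ M.comap (T : E →ₗ[ℝ] F)) : (E ⧸ L) →L[ℝ] (F ⧸ M) :=
  { toLinearMap := L.mapQ M (T : E →ₗ[ℝ] F) h
    cont := by
      refine (Submodule.isOpenQuotientMap_mkQ L).isQuotientMap.continuous_iff.mpr ?_
      simp only [LinearMap.toFun_eq_coe]
      have h2 : ⇑(L.mapQ M (T : E →ₗ[ℝ] F) h) ∘ ⇑L.mkQ = ⇑M.mkQ ∘ ⇑T := by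
        ext x
        simp [Submodule.mapQ_apply, Submodule.mkQ_apply]
      rw [h2]
      exact continuous_quot_mk.comp T.continuous }

@[simp] lemma inducedQuotCLM_mk {E F : Type*} [NormedAddCommGroup E] [NormedSpace ℝ E]
    [NormedAddCommGroup F] [NormedSpace ℝ F] (T : E →L[ℝ] F) (L : Submodule ℝ E)
    (M : Submodule ℝ F) (h : L ≤ M.comap (T : E →ₗ[ℝ] F)) (u : E) :
    inducedQuotCLM T L M h (Submodule.Quotient.mk u) = Submodule.Quotient.mk (T u) := by
  rfl

theorem stmt2 {E F : Type*} [NormedAddCommGroup E] [NormedSpace ℝ E] [CompleteSpace E]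
    [NormedAddCommGroup F] [NormedSpace ℝ F] [CompleteSpace F]
    (T : E →L[ℝ] F) (hT : ¬ IsClosed (Set.range T))
    (M : Submodule ℝ F) (hM : IsClosed (M : Set F)) (hMr : (M : Set F) ⊆ Set.range T) :
    HasKatoPropFor T (M.comap (T : E →ₗ[ℝ] F)) := by
  classical
  intro W hW hLW hfin ε hε
  set L : Submodule ℝ E := M.comap (T : E →ₗ[ℝ] F) with hL
  have hLclosed : IsClosed (L : Set E) := hM.preimage T.continuous
  haveI := hLclosed
  haveI := hM
  by_contra hcon
  push_neg at hcon
  -- hcon : ∀ u ∈ W, u ∉ L → ε * ‖L.mkQ u‖ < ‖T u‖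
  have key : ∀ u ∈ W, ε * ‖L.mkQ u‖ ≤ ‖M.mkQ (T u)‖ := by
    intro u hu
    by_contra h'
    push_neg at h'
    have hδ : (0:ℝ) < ε * ‖L.mkQ u‖ - ‖M.mkQ (T u)‖ := by linarith
    obtain ⟨y, hy1, hy2⟩ := Submodule.Quotient.norm_mk_lt (M.mkQ (T u)) hδ
    have hy2' : ‖y‖ < ε * ‖L.mkQ u‖ := by linarith
    have hmem : y - T u ∈ M := (Submodule.Quotient.eq M).mp (by
      rw [hy1]; rfl)
    obtain ⟨v, hv⟩ := hMr hmem
    have hvL : v ∈ L := by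
      simp only [hL, Submodule.mem_comap, ContinuousLinearMap.coe_coe]
      rw [hv]; exact hmem
    have hu' : u + v ∈ W := W.add_mem hu (hLW hvL)
    have hTuv : T (u + v) = y := by rw [map_add, hv]; abel
    have hmk0 : L.mkQ v = 0 := (Submodule.Quotient.mk_eq_zero L).mpr hvL
    have hmk : L.mkQ (u + v) = L.mkQ u := by
      rw [map_add, hmk0, add_zero]
    have huL : u ∉ L := by
      intro hmemL
      have : L.mkQ u = 0 := (Submodule.Quotient.mk_eq_zero L).mpr hmemL
      rw [this, norm_zero] at hy2'
      have := norm_nonneg y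
      linarith
    have hne : u + v ∉ L := by
      intro hmemL
      exact huL (by simpa using L.sub_mem hmemL hvL)
    have := hcon (u + v) hu' hne
    rw [hmk, hTuv] at this
    linarith
  -- the induced operator on quotients
  have hle : L ≤ M.comap (T : E →ₗ[ℝ] F) := le_rfl
  set S : (E ⧸ L) →L[ℝ] (F ⧸ M) := inducedQuotCLM T L M hle with hS
  set V : Submodule ℝ (E ⧸ L) := W.map L.mkQ with hV
  -- V is closed
  have hcomapV : Submodule.comap L.mkQ V = W := by
    rw [hV, Submodule.comap_map_mkQ, sup_eq_right.mpr hLW]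
  have hVclosed : IsClosed (V : Set (E ⧸ L)) := by
    rw [← (Submodule.isOpenQuotientMap_mkQ L).isQuotientMap.isClosed_preimage]
    have : ⇑L.mkQ ⁻¹' (V : Set (E ⧸ L)) = (W : Set E) := by rw [← hcomapV]; rfl
    rw [this]; exact hW
  haveI : CompleteSpace V := hVclosed.completeSpace_coe
  set A : V →L[ℝ] (F ⧸ M) := S.comp V.subtypeL with hA
  set K : NNReal := ⟨ε⁻¹, inv_nonneg.mpr hε.le⟩ with hK
  have hSmk : ∀ u : E, S (L.mkQ u) = M.mkQ (T u) := fun u => by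
    rw [hS]; exact inducedQuotCLM_mk T L M hle u
  have hbound : ∀ x : V, ‖x‖ ≤ (K : ℝ) * ‖A x‖ := by
    rintro ⟨x, hx⟩
    obtain ⟨u, hu, rfl⟩ := hx
    have hAx : A ⟨L.mkQ u, ⟨u, hu, rfl⟩⟩ = M.mkQ (T u) := hSmk u
    rw [hAx]
    have hkey := key u hu
    have hxn : ‖(⟨L.mkQ u, ⟨u, hu, rfl⟩⟩ : V)‖ = ‖L.mkQ u‖ := rfl
    rw [hxn]
    show ‖L.mkQ u‖ ≤ ε⁻¹ * ‖M.mkQ (T u)‖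
    rw [inv_mul_eq_div, le_div_iff₀ hε, mul_comm]
    exact hkey
  have hanti : AntilipschitzWith K A := A.antilipschitz_of_bound hbound
  have hrangeA : IsClosed (Set.range A) := hanti.isClosed_range A.uniformContinuous
  -- range of A is the image of V under S
  have hSVclosed : IsClosed ((Submodule.map (S : (E ⧸ L) →ₗ[ℝ] (F ⧸ M)) V : Submodule ℝ (F ⧸ M)) : Set (F ⧸ M)) := by
    have he : ((Submodule.map (S : (E ⧸ L) →ₗ[ℝ] (F ⧸ M)) V : Submodule ℝ (F ⧸ M)) : Set (F ⧸ M)) = Set.range ⇑A := by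
      ext z
      simp only [SetLike.mem_coe, Submodule.mem_map, Set.mem_range]
      constructor
      · rintro ⟨x, hx, rfl⟩; exact ⟨⟨x, hx⟩, rfl⟩
      · rintro ⟨⟨x, hx⟩, rfl⟩; exact ⟨x, hx, rfl⟩
    rw [he]
    exact hrangeA
  set DF : Submodule ℝ F := Submodule.comap M.mkQ (Submodule.map (S : (E ⧸ L) →ₗ[ℝ] (F ⧸ M)) V) with hDF
  have hDFclosed : IsClosed (DF : Set F) := by
    have : (DF : Set F) = ⇑M.mkQ ⁻¹' ((Submodule.map (S : (E ⧸ L) →ₗ[ℝ] (F ⧸ M)) V : Submodule ℝ (F ⧸ M)) : Set (F ⧸ M)) := rfl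
    rw [this]
    exact hSVclosed.preimage continuous_quot_mk
  have hDFeq : DF = Submodule.map (T : E →ₗ[ℝ] F) W ⊔ M := by
    ext y
    simp only [hDF, Submodule.mem_comap, Submodule.mem_map, Submodule.mem_sup]
    constructor
    · rintro ⟨x, ⟨u, huW, rfl⟩, hSy⟩
      have : M.mkQ (T u) = M.mkQ y := by
        rw [← hSy]; exact (hSmk u).symm
      have hyTu : y - T u ∈ M := (Submodule.Quotient.eq M).mp this.symm
      exact ⟨T u, ⟨u, huW, rfl⟩, y - T u, hyTu, by abel⟩
    · rintro ⟨_, ⟨u, huW, rfl⟩, m, hm, rfl⟩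
      refine ⟨L.mkQ u, ⟨u, huW, rfl⟩, ?_⟩
      have h1 : (S : (E ⧸ L) →ₗ[ℝ] (F ⧸ M)) (L.mkQ u) = M.mkQ (T u) := hSmk u
      rw [h1]
      rw [eq_comm]
      refine (Submodule.Quotient.eq M).mpr ?_
      simpa using hm
  -- finite-dimensional complement
  obtain ⟨U, hU⟩ := Submodule.exists_isCompl W
  haveI : FiniteDimensional ℝ (E ⧸ W) := hfin
  haveI hUfin : FiniteDimensional ℝ U :=
    (Submodule.quotientEquivOfIsCompl W U hU).finiteDimensional
  set G : Submodule ℝ F := Submodule.map (T : E →ₗ[ℝ] F) U with hG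
  haveI : FiniteDimensional ℝ G := Module.Finite.map U (T : E →ₗ[ℝ] F)
  have hsplit : LinearMap.range (T : E →ₗ[ℝ] F) = Submodule.map (T : E →ₗ[ℝ] F) W ⊔ G := by
    rw [LinearMap.range_eq_map, ← hU.sup_eq_top, Submodule.map_sup, hG]
  have hMle : M ≤ LinearMap.range (T : E →ₗ[ℝ] F) := by
    intro m hm
    obtain ⟨v, hv⟩ := hMr hm
    exact ⟨v, hv⟩
  have hrangeT : LinearMap.range (T : E →ₗ[ℝ] F) = DF ⊔ G := by
    rw [hDFeq, sup_right_comm, ← hsplit, sup_eq_left.mpr hMle]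
  -- DF ⊔ G is closed
  haveI := hDFclosed
  have hGclosed : IsClosed ((DF ⊔ G : Submodule ℝ F) : Set F) := by
    have h1 : DF ⊔ G = Submodule.comap DF.mkQ (Submodule.map DF.mkQ G) := by
      rw [Submodule.comap_map_mkQ]
    haveI : FiniteDimensional ℝ (Submodule.map DF.mkQ G) := Module.Finite.map G DF.mkQ
    have h2 : IsClosed ((Submodule.map DF.mkQ G : Submodule ℝ (F ⧸ DF)) : Set (F ⧸ DF)) :=
      Submodule.closed_of_finiteDimensional _
    have h3 : ((DF ⊔ G : Submodule ℝ F) : Set F) = ⇑DF.mkQ ⁻¹' ((Submodule.map DF.mkQ G : Submodule ℝ (F ⧸ DF)) : Set (F ⧸ DF)) := by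
      rw [h1]; rfl
    rw [h3]
    exact h2.preimage continuous_quot_mk
  apply hT
  have : Set.range ⇑T = ((DF ⊔ G : Submodule ℝ F) : Set F) := by
    rw [← hrangeT]
    rw [LinearMap.coe_range]
    rfl
  rw [this]
  exact hGclosed
end

section
/- Let E be a Banach space and X, Y ⊆ E closed subspaces. Then X + Y is not closed in E if and only if the restriction to X of the canonical quotient map Q_Y : E → E/Y has the Kato property for the subspace X ∩ Y. -/
open Submodule Topology TopologicalSpace

section Helpers

open Metric NNReal

variable {V F : Type*} [NormedAddCommGroup V] [NormedSpace ℝ V]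
  [NormedAddCommGroup F] [NormedSpace ℝ F]

noncomputable def cliftQ (L : Submodule ℝ V) (T : V →L[ℝ] F)
    (h : L ≤ LinearMap.ker (T : V →ₗ[ℝ] F)) : (V ⧸ L) →L[ℝ] F :=
  { toLinearMap := L.liftQ (T : V →ₗ[ℝ] F) h
    cont := by
      rw [(Submodule.isOpenQuotientMap_mkQ L).isQuotientMap.continuous_iff]
      exact T.continuous }

@[simp] lemma cliftQ_mk (L : Submodule ℝ V) (T : V →L[ℝ] F) (h) (x : V) :
    cliftQ L T h (L.mkQ x) = T x := rfl

lemma range_cliftQ (L : Submodule ℝ V) (T : V →L[ℝ] F) (h) :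
    LinearMap.range (cliftQ L T h : (V ⧸ L) →ₗ[ℝ] F) = LinearMap.range (T : V →ₗ[ℝ] F) := by
  have : LinearMap.range (cliftQ L T h).toLinearMap = LinearMap.range (T : V →ₗ[ℝ] F) :=
    L.range_liftQ _ _
  simpa using this

lemma norm_mkQ (L : Submodule ℝ V) (x : V) : ‖L.mkQ x‖ = infDist x L :=
  QuotientAddGroup.norm_mk x

lemma norm_mkQ_pos (L : Submodule ℝ V) (hL : IsClosed (L : Set V)) {x : V} (hx : x ∉ L) :
    0 < ‖L.mkQ x‖ := by
  rcases (norm_nonneg (L.mkQ x)).lt_or_eq with h | h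
  · exact h
  · exfalso
    rw [norm_mkQ] at h
    have : x ∈ closure (L : Set V) :=
      (mem_closure_iff_infDist_zero ⟨0, L.zero_mem⟩).2 h.symm
    exact hx (by rwa [hL.closure_eq] at this)

lemma norm_mkQ_comap {W L : Submodule ℝ V} (hLW : L ≤ W) (w : W) :
    ‖(L.comap W.subtype).mkQ w‖ = ‖L.mkQ (w : V)‖ := by
  rw [norm_mkQ, norm_mkQ]
  have himg : W.subtype '' ((L.comap W.subtype : Submodule ℝ W) : Set W) = (L : Set V) := by
    rw [← Submodule.map_coe, Submodule.map_comap_subtype, inf_eq_right.mpr hLW]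
  rw [← himg]
  exact (infDist_image isometry_subtype_coe).symm

lemma isClosed_sup_fd (C D : Submodule ℝ F) (hC : IsClosed (C : Set F))
    [FiniteDimensional ℝ D] : IsClosed ((C ⊔ D : Submodule ℝ F) : Set F) := by
  haveI : IsClosed (C : Set F) := hC
  have h : C ⊔ D = Submodule.comap C.mkQ (Submodule.map C.mkQ D) := by
    rw [Submodule.comap_map_eq, Submodule.ker_mkQ, sup_comm]
  rw [h]
  have hclosed : IsClosed ((Submodule.map C.mkQ D : Submodule ℝ (F ⧸ C)) : Set (F ⧸ C)) :=
    Submodule.closed_of_finiteDimensional _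
  exact hclosed.preimage continuous_quot_mk

lemma bound_of_closed_range [CompleteSpace V] [CompleteSpace F]
    (T : V →L[ℝ] F) (hcl : IsClosed (Set.range ⇑T)) :
    ∃ K : ℝ≥0, ∀ u : V, ‖(LinearMap.ker (T : V →ₗ[ℝ] F)).mkQ u‖ ≤ K * ‖T u‖ := by
  set L := LinearMap.ker (T : V →ₗ[ℝ] F) with hL
  haveI : IsClosed ((L : Submodule ℝ V) : Set V) := ContinuousLinearMap.isClosed_ker T
  set R : Submodule ℝ F := LinearMap.range (T : V →ₗ[ℝ] F) with hR
  have hRcl : IsClosed (R : Set F) := by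
    have : (R : Set F) = Set.range ⇑T := by
      ext z; simp [hR, LinearMap.mem_range]
    rwa [this]
  haveI : CompleteSpace R := hRcl.completeSpace_coe
  have hsub : ∀ q, cliftQ L T le_rfl q ∈ R := by
    intro q
    have : cliftQ L T le_rfl q ∈ LinearMap.range (cliftQ L T le_rfl : (V ⧸ L) →ₗ[ℝ] F) :=
      LinearMap.mem_range_self _ q
    rwa [range_cliftQ] at this
  set Tc : (V ⧸ L) →L[ℝ] R := (cliftQ L T le_rfl).codRestrict R hsub with hTc
  have hker : LinearMap.ker (Tc : (V ⧸ L) →ₗ[ℝ] R) = ⊥ := by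
    rw [hTc, ContinuousLinearMap.ker_codRestrict]
    exact Submodule.ker_liftQ_eq_bot _ _ _ le_rfl
  have hrange : LinearMap.range (Tc : (V ⧸ L) →ₗ[ℝ] R) = ⊤ := by
    rw [LinearMap.range_eq_top]
    rintro ⟨z, hz⟩
    rw [hR] at hz
    obtain ⟨v, hv⟩ := hz
    exact ⟨L.mkQ v, Subtype.ext hv⟩
  set e := ContinuousLinearEquiv.ofBijective Tc hker hrange with he
  obtain ⟨K, hK⟩ : ∃ K : ℝ≥0, AntilipschitzWith K ⇑e := ⟨_, e.antilipschitz⟩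
  refine ⟨K, fun u => ?_⟩
  have h1 := hK.le_mul_dist (L.mkQ u) 0
  exact (by simpa [dist_eq_norm, he, hTc] using h1 : ‖L.mkQ u‖ ≤ K * ‖cliftQ L T le_rfl (L.mkQ u)‖)

/-- Kato property (general form): not closed range iff Kato for the kernel. -/
theorem katoIff [CompleteSpace V] [CompleteSpace F] (T : V →L[ℝ] F) :
    ¬ IsClosed (Set.range ⇑T) ↔ HasKatoPropFor T (LinearMap.ker (T : V →ₗ[ℝ] F)) := by
  set L := LinearMap.ker (T : V →ₗ[ℝ] F) with hLdef
  have hLcl : IsClosed ((L : Submodule ℝ V) : Set V) := ContinuousLinearMap.isClosed_ker T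
  -- (B) : ¬ Kato → closed
  have hB : ¬ HasKatoPropFor T L → IsClosed (Set.range ⇑T) := by
    intro hk
    rw [HasKatoPropFor] at hk
    push_neg at hk
    obtain ⟨W, hWc, hLW, hWfd, ε, hε, hall⟩ := hk
    -- the inequality on all of W
    have key : ∀ u ∈ W, ε * ‖L.mkQ u‖ ≤ ‖T u‖ := by
      intro u hu
      by_cases huL : u ∈ L
      · have : L.mkQ u = 0 := (Submodule.Quotient.mk_eq_zero _).2 huL
        rw [this, norm_zero, mul_zero]
        exact norm_nonneg _
      · exact (hall u hu huL).le
    -- the restriction of `T` to `W`, modulo its kernel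
    haveI : CompleteSpace W := hWc.completeSpace_coe
    set S : W →L[ℝ] F := T.comp W.subtypeL with hS
    set N : Submodule ℝ W := L.comap W.subtype with hN
    have hNker : N ≤ LinearMap.ker (S : W →ₗ[ℝ] F) := by
      intro w hw
      simpa [hS, hN, hLdef, LinearMap.mem_ker] using hw
    haveI : IsClosed (N : Set W) := IsClosed.preimage continuous_subtype_val hLcl
    set Sb := cliftQ N S hNker with hSb
    have hanti : AntilipschitzWith (⟨ε, hε.le⟩ : ℝ≥0)⁻¹ ⇑Sb := by
      apply ContinuousLinearMap.antilipschitz_of_bound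
      intro q
      obtain ⟨w, rfl⟩ := Submodule.Quotient.mk_surjective N q
      have h1 : (Submodule.Quotient.mk w : W ⧸ N) = N.mkQ w := rfl
      rw [h1, cliftQ_mk, norm_mkQ_comap hLW]
      have h2 := key w w.2
      change ‖L.mkQ (w : V)‖ ≤ ε⁻¹ * ‖S w‖
      rw [← div_eq_inv_mul, le_div_iff₀ hε, mul_comm]
      simpa [hS] using h2
    have hWcl : IsClosed ((Submodule.map (T : V →ₗ[ℝ] F) W : Submodule ℝ F) : Set F) := by
      have h1 : Set.range ⇑Sb = ((Submodule.map (T : V →ₗ[ℝ] F) W : Submodule ℝ F) : Set F) := by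
        ext z
        constructor
        · rintro ⟨q, rfl⟩
          obtain ⟨w, rfl⟩ := Submodule.Quotient.mk_surjective N q
          exact ⟨w, w.2, rfl⟩
        · rintro ⟨v, hv, rfl⟩
          exact ⟨N.mkQ ⟨v, hv⟩, rfl⟩
      rw [← h1]
      exact hanti.isClosed_range Sb.uniformContinuous
    -- a finite-dimensional complement of `W`
    obtain ⟨s, hs⟩ := Module.finite_def.mp hWfd
    set f := Function.surjInv (Submodule.Quotient.mk_surjective W) with hf
    set G : Submodule ℝ V := Submodule.span ℝ (f '' (s : Set (V ⧸ W))) with hG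
    haveI : FiniteDimensional ℝ G :=
      FiniteDimensional.span_of_finite ℝ (s.finite_toSet.image f)
    have hmap : Submodule.map W.mkQ G = ⊤ := by
      rw [hG, Submodule.map_span]
      have : ⇑W.mkQ '' (f '' (s : Set (V ⧸ W))) = (s : Set (V ⧸ W)) := by
        rw [← Set.image_comp]
        have : (⇑W.mkQ ∘ f) = id := by
          funext x
          exact Function.surjInv_eq (Submodule.Quotient.mk_surjective W) x
        rw [this, Set.image_id]
      rw [this, hs]
    have hWG : W ⊔ G = ⊤ := by
      have h1 := Submodule.comap_map_eq W.mkQ G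
      rw [hmap, Submodule.ker_mkQ] at h1
      rw [sup_comm, ← h1, Submodule.comap_top]
    -- conclude
    have hrange : LinearMap.range (T : V →ₗ[ℝ] F)
        = Submodule.map (T : V →ₗ[ℝ] F) W ⊔ Submodule.map (T : V →ₗ[ℝ] F) G := by
      rw [← Submodule.map_sup, hWG, Submodule.map_top]
    have : IsClosed ((LinearMap.range (T : V →ₗ[ℝ] F) : Submodule ℝ F) : Set F) := by
      rw [hrange]
      haveI : FiniteDimensional ℝ (Submodule.map (T : V →ₗ[ℝ] F) G) :=
        Module.Finite.map G (T : V →ₗ[ℝ] F)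
      exact isClosed_sup_fd _ _ hWcl
    have hset : ((LinearMap.range (T : V →ₗ[ℝ] F) : Submodule ℝ F) : Set F) = Set.range ⇑T := by
      ext z; simp [LinearMap.mem_range]
    rwa [hset] at this
  constructor
  · intro hnc
    by_contra hk
    exact hnc (hB hk)
  · -- (A) : Kato → ¬ closed
    intro hk hcl
    obtain ⟨K, hK⟩ := bound_of_closed_range T hcl
    haveI : Subsingleton (V ⧸ (⊤ : Submodule ℝ V)) :=
      Submodule.Quotient.subsingleton_iff.mpr rfl
    haveI : FiniteDimensional ℝ (V ⧸ (⊤ : Submodule ℝ V)) :=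
      Module.Finite.of_surjective (0 : (Fin 0 → ℝ) →ₗ[ℝ] _)
        (fun x => ⟨0, Subsingleton.elim _ _⟩)
    have hε : (0:ℝ) < 1 / (2 * ((K : ℝ) + 1)) := by positivity
    obtain ⟨u, -, huL, hu⟩ := hk ⊤ isClosed_univ le_top inferInstance _ hε
    have hpos : 0 < ‖L.mkQ u‖ := norm_mkQ_pos L hLcl huL
    have h1 : ‖L.mkQ u‖ ≤ K * ‖T u‖ := hK u
    have h2 : (K : ℝ) * ‖T u‖ ≤ (K : ℝ) * (1 / (2 * ((K : ℝ) + 1)) * ‖L.mkQ u‖) :=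
      mul_le_mul_of_nonneg_left hu K.coe_nonneg
    have hKnn : (0:ℝ) ≤ K := K.coe_nonneg
    have h3 : (K : ℝ) * (1 / (2 * ((K : ℝ) + 1))) < 1 := by
      rw [mul_one_div, div_lt_one (by positivity)]
      linarith
    have h4 : (K : ℝ) * (1 / (2 * ((K : ℝ) + 1)) * ‖L.mkQ u‖) < ‖L.mkQ u‖ := by
      rw [← mul_assoc]
      nth_rewrite 2 [← one_mul ‖L.mkQ u‖]
      exact mul_lt_mul_of_pos_right h3 hpos
    linarith

end Helpers

theorem stmt3 {E : Type*} [NormedAddCommGroup E] [NormedSpace ℝ E] [CompleteSpace E]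
    (X Y : Submodule ℝ E) (hX : IsClosed (X : Set E)) (hY : IsClosed (Y : Set E)) :
    ¬ IsClosed ((X ⊔ Y : Submodule ℝ E) : Set E) ↔
      HasKatoPropFor (quotRestrict X Y) ((X ⊓ Y).comap X.subtype) := by
  haveI : IsClosed (Y : Set E) := hY
  haveI : CompleteSpace X := hX.completeSpace_coe
  have hker : (X ⊓ Y).comap X.subtype = LinearMap.ker (quotRestrict X Y : ↥X →ₗ[ℝ] E ⧸ Y) := by
    ext u
    simp only [Submodule.mem_comap, Submodule.mem_inf, LinearMap.mem_ker]
    constructor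
    · rintro ⟨-, h2⟩
      exact (Submodule.Quotient.mk_eq_zero _).2 h2
    · intro h
      exact ⟨u.2, (Submodule.Quotient.mk_eq_zero _).1 h⟩
  have hq : IsQuotientMap (⇑Y.mkQ) := QuotientAddGroup.isQuotientMap_mk Y.toAddSubgroup
  have hpre : (⇑Y.mkQ) ⁻¹' (Set.range ⇑(quotRestrict X Y))
      = ((X ⊔ Y : Submodule ℝ E) : Set E) := by
    have h1 : Set.range ⇑(quotRestrict X Y)
        = ((Submodule.map Y.mkQ X : Submodule ℝ (E ⧸ Y)) : Set (E ⧸ Y)) := by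
      ext z
      constructor
      · rintro ⟨u, rfl⟩; exact ⟨u, u.2, rfl⟩
      · rintro ⟨v, hv, rfl⟩; exact ⟨⟨v, hv⟩, rfl⟩
    rw [h1]
    have h2 : Submodule.comap Y.mkQ (Submodule.map Y.mkQ X) = X ⊔ Y := by
      rw [Submodule.comap_map_eq, Submodule.ker_mkQ]
    rw [← h2]; rfl
  have hcl : IsClosed ((X ⊔ Y : Submodule ℝ E) : Set E)
      ↔ IsClosed (Set.range ⇑(quotRestrict X Y)) := by
    rw [← hpre]; exact hq.isClosed_preimage
  rw [hker, hcl.not]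
  exact katoIff (quotRestrict X Y)
end

section
/- Let E and F be Banach spaces, T : E → F a bounded linear operator, M ⊆ E a closed subspace, and {(z_n, f_n)} ⊆ E × M^⊥ a biorthogonal system (f_n(z_m) = δ_{nm}, each f_n vanishing on M). Assume there is α > 1 such that for all n: ‖Q_M z_n‖ ≤ αⁿ ‖f_n‖⁻¹ and ‖T z_n‖ ≤ α^{-2n} ‖Q_M z_n‖. Then T has the Kato property for M. -/
open Submodule Topology TopologicalSpace

/-- A functional vanishing on `M` is bounded by its norm times the quotient norm. -/
lemma abs_apply_le_norm_mul_norm_mkQ {E : Type*} [NormedAddCommGroup E] [NormedSpace ℝ E]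
    (M : Submodule ℝ E) (g : E →L[ℝ] ℝ) (hg : ∀ x ∈ M, g x = 0) (u : E) :
    |g u| ≤ ‖g‖ * ‖M.mkQ u‖ := by
  refine le_of_forall_pos_le_add fun ε hε => ?_
  have hδ : (0:ℝ) < ε / (‖g‖ + 1) := div_pos hε (by positivity)
  obtain ⟨m, hm, hm'⟩ := Submodule.Quotient.norm_mk_lt (M.mkQ u) hδ
  have hmem : m - u ∈ M := by
    have : Submodule.Quotient.mk m = (Submodule.Quotient.mk u : E ⧸ M) := hm
    exact (Submodule.Quotient.eq M).mp this
  have hgm : g m = g u := by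
    have h0 : g (m - u) = 0 := hg _ hmem
    have := g.map_sub m u
    rw [h0] at this
    linarith
  have hb : |g u| ≤ ‖g‖ * (‖M.mkQ u‖ + ε / (‖g‖ + 1)) := by
    calc |g u| = |g m| := by rw [hgm]
    _ = ‖g m‖ := rfl
    _ ≤ ‖g‖ * ‖m‖ := g.le_opNorm m
    _ ≤ ‖g‖ * (‖M.mkQ u‖ + ε / (‖g‖ + 1)) := by
        exact mul_le_mul_of_nonneg_left hm'.le (norm_nonneg g)
  have hng : (0:ℝ) ≤ ‖g‖ := norm_nonneg g
  have : ‖g‖ * (ε / (‖g‖ + 1)) ≤ ε := by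
    have h1 : (0:ℝ) < ‖g‖ + 1 := by positivity
    rw [mul_div_assoc', div_le_iff₀ h1]
    nlinarith
  nlinarith [hb]

theorem stmt5 {E F : Type*} [NormedAddCommGroup E] [NormedSpace ℝ E] [CompleteSpace E]
    [NormedAddCommGroup F] [NormedSpace ℝ F] [CompleteSpace F]
    (T : E →L[ℝ] F) (M : Submodule ℝ E) (hM : IsClosed (M : Set E))
    (z : ℕ → E) (f : ℕ → E →L[ℝ] ℝ)
    (hfM : ∀ n, ∀ x ∈ M, f n x = 0)
    (hbi : ∀ n m, f n (z m) = if n = m then 1 else 0)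
    (α : ℝ) (hα : 1 < α)
    (h1 : ∀ n, ‖M.mkQ (z n)‖ ≤ α ^ n * ‖f n‖⁻¹)
    (h2 : ∀ n, ‖T (z n)‖ ≤ (α ^ (2 * n))⁻¹ * ‖M.mkQ (z n)‖) :
    HasKatoPropFor T M := by
  classical
  intro W hW hMW hfd ε hε
  set d := Module.finrank ℝ (E ⧸ W) with hd
  have hαpos : (0:ℝ) < α := lt_trans one_pos hα
  have hαinv0 : (0:ℝ) ≤ α⁻¹ := by positivity
  have hαinv1 : α⁻¹ ≤ 1 := le_of_lt (inv_lt_one_of_one_lt₀ hα)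
  -- each f n is nonzero
  have hfpos : ∀ n, (0:ℝ) < ‖f n‖ := by
    intro n
    have h1 : f n (z n) = 1 := by simpa using hbi n n
    have : f n ≠ 0 := fun h => by simp [h] at h1
    exact norm_pos_iff.mpr this
  -- pick N with (d+1) * α⁻¹ ^ N < ε
  obtain ⟨N, hN⟩ := exists_pow_lt_of_lt_one (show (0:ℝ) < ε / (d+1) by positivity)
    (inv_lt_one_of_one_lt₀ hα)
  -- the d+1 vectors W.mkQ (z (N+i)) are linearly dependent
  have hnotli : ¬ LinearIndependent ℝ (fun i : Fin (d+1) => W.mkQ (z (N + i))) := by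
    intro h
    have := h.fintype_card_le_finrank
    simp only [Fintype.card_fin] at this
    omega
  obtain ⟨c, hsum, i₀, hi₀⟩ := Fintype.not_linearIndependent_iff.mp hnotli
  set u : E := ∑ i : Fin (d+1), c i • z (N + i) with hu
  -- u ∈ W
  have huW : u ∈ W := by
    have : W.mkQ u = 0 := by
      rw [hu, map_sum]
      simpa [Submodule.mkQ_apply] using hsum
    simpa [Submodule.mkQ_apply, Submodule.Quotient.mk_eq_zero] using this
  -- f (N+j) u = c j
  have hfu : ∀ j : Fin (d+1), f (N + j) u = c j := by
    intro j
    rw [hu, map_sum]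
    have : ∀ i : Fin (d+1), f (N + (j:ℕ)) (c i • z (N + i)) =
        if j = i then c i else 0 := by
      intro i
      rw [map_smul, hbi]
      by_cases h : j = i
      · simp [h]
      · have : (N + (j:ℕ)) ≠ (N + (i:ℕ)) := by
          intro hc
          exact h (Fin.ext (by omega))
        simp [this, h]
        exact fun hji => absurd (Fin.ext hji) h
    rw [Finset.sum_congr rfl fun i _ => this i]
    simp
  -- u ∉ M
  have huM : u ∉ M := by
    intro hmem
    have := hfM (N + i₀) u hmem
    rw [hfu i₀] at this
    exact hi₀ this
  refine ⟨u, huW, huM, ?_⟩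
  -- key: |c i| * ‖f (N+i)‖⁻¹ ≤ ‖M.mkQ u‖
  have hkey : ∀ i : Fin (d+1), |c i| * ‖f (N + i)‖⁻¹ ≤ ‖M.mkQ u‖ := by
    intro i
    have h1 : |c i| ≤ ‖f (N + i)‖ * ‖M.mkQ u‖ := by
      rw [← hfu i]
      exact abs_apply_le_norm_mul_norm_mkQ M (f (N + i)) (hfM (N + i)) u
    have hpos := hfpos (N + i)
    refine le_trans (mul_le_mul_of_nonneg_right h1 (by positivity)) ?_
    rw [mul_comm ‖f (N + (i:ℕ))‖ ‖M.mkQ u‖, mul_assoc, mul_inv_cancel₀ hpos.ne', mul_one]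
  have hQnonneg : (0:ℝ) ≤ ‖M.mkQ u‖ := norm_nonneg _
  -- termwise estimate
  have hterm : ∀ i : Fin (d+1),
      ‖c i • T (z (N + i))‖ ≤ ‖M.mkQ u‖ * α⁻¹ ^ N := by
    intro i
    set n := N + (i:ℕ) with hn
    have e1 : ‖c i • T (z n)‖ = |c i| * ‖T (z n)‖ := by
      rw [norm_smul, Real.norm_eq_abs]
    have e2 : ‖T (z n)‖ ≤ (α ^ (2*n))⁻¹ * (α ^ n * ‖f n‖⁻¹) := by
      refine le_trans (h2 n) ?_
      exact mul_le_mul_of_nonneg_left (h1 n) (by positivity)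
    have e3 : (α ^ (2*n))⁻¹ * (α ^ n * ‖f n‖⁻¹) = α⁻¹ ^ n * ‖f n‖⁻¹ := by
      rw [two_mul, pow_add, mul_inv, inv_pow]
      field_simp
    have e4 : |c i| * ‖T (z n)‖ ≤ (|c i| * ‖f n‖⁻¹) * α⁻¹ ^ n := by
      calc |c i| * ‖T (z n)‖ ≤ |c i| * (α⁻¹ ^ n * ‖f n‖⁻¹) := by
            rw [← e3]; exact mul_le_mul_of_nonneg_left (e2) (abs_nonneg _)
      _ = (|c i| * ‖f n‖⁻¹) * α⁻¹ ^ n := by ring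
    have e5 : (|c i| * ‖f n‖⁻¹) * α⁻¹ ^ n ≤ ‖M.mkQ u‖ * α⁻¹ ^ N := by
      have hp : α⁻¹ ^ n ≤ α⁻¹ ^ N := pow_le_pow_of_le_one hαinv0 hαinv1 (by omega)
      have h6 : (0:ℝ) ≤ |c i| * ‖f n‖⁻¹ := by positivity
      calc (|c i| * ‖f n‖⁻¹) * α⁻¹ ^ n ≤ (|c i| * ‖f n‖⁻¹) * α⁻¹ ^ N :=
            mul_le_mul_of_nonneg_left hp h6
      _ ≤ ‖M.mkQ u‖ * α⁻¹ ^ N := mul_le_mul_of_nonneg_right (hkey i) (by positivity)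
    rw [e1]
    exact le_trans e4 e5
  -- sum up
  have hsum2 : ‖T u‖ ≤ (d+1 : ℝ) * (‖M.mkQ u‖ * α⁻¹ ^ N) := by
    calc ‖T u‖ = ‖∑ i : Fin (d+1), c i • T (z (N + i))‖ := by
          rw [hu, map_sum]; simp [map_smul]
    _ ≤ ∑ i : Fin (d+1), ‖c i • T (z (N + i))‖ := norm_sum_le _ _
    _ ≤ ∑ _i : Fin (d+1), ‖M.mkQ u‖ * α⁻¹ ^ N := Finset.sum_le_sum fun i _ => hterm i
    _ = (d+1 : ℝ) * (‖M.mkQ u‖ * α⁻¹ ^ N) := by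
          rw [Finset.sum_const, Finset.card_univ, Fintype.card_fin]
          push_cast [nsmul_eq_mul]
          ring
  have hfinal : (d+1 : ℝ) * α⁻¹ ^ N ≤ ε := by
    have hpos : (0:ℝ) < (d:ℝ) + 1 := by positivity
    have := (lt_div_iff₀ hpos).mp hN
    nlinarith
  calc ‖T u‖ ≤ (d+1 : ℝ) * (‖M.mkQ u‖ * α⁻¹ ^ N) := hsum2
  _ = ((d+1 : ℝ) * α⁻¹ ^ N) * ‖M.mkQ u‖ := by ring
  _ ≤ ε * ‖M.mkQ u‖ := mul_le_mul_of_nonneg_right hfinal hQnonneg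
end

section
/- Let T : E → F be a dense-range bounded linear operator between Banach spaces and suppose there exists a closed infinite-codimensional subspace E₁ ⊆ E with T(E₁) dense in F. If there is a closed finite-codimensional subspace Z ⊆ E on which T restricts to an isomorphic embedding, then a contradiction arises; hence no such Z exists, i.e., T has the Kato property. -/
open Submodule Topology TopologicalSpace

theorem stmt8 {E F : Type*} [NormedAddCommGroup E] [NormedSpace ℝ E] [CompleteSpace E]
    [NormedAddCommGroup F] [NormedSpace ℝ F] [CompleteSpace F]
    (T : E →L[ℝ] F) (hd : DenseRange T)
    (E₁ : Submodule ℝ E) (hE₁ : IsClosed (E₁ : Set E))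
    (hcod : ¬ FiniteDimensional ℝ (E ⧸ E₁)) (hdense : Dense (T '' (E₁ : Set E))) :
    ∀ Z : Submodule ℝ E, IsClosed (Z : Set E) → FiniteDimensional ℝ (E ⧸ Z) →
      ¬ ∃ c : ℝ, 0 < c ∧ ∀ x ∈ Z, c * ‖x‖ ≤ ‖T x‖ := by
  intro Z hZcl hZfd
  rintro ⟨c, hc, hbound⟩
  -- T is injective on Z
  have hinj : ∀ x ∈ Z, T x = 0 → x = 0 := by
    intro x hx hTx
    have := hbound x hx
    rw [hTx, norm_zero] at this
    have : ‖x‖ ≤ 0 := by nlinarith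
    simpa using le_antisymm this (norm_nonneg x)
  set K : Submodule ℝ E := E₁ ⊓ Z with hKdef
  have hKcl : IsClosed (K : Set E) := hE₁.inter hZcl
  haveI : CompleteSpace K := hKcl.completeSpace_coe
  set S : ↥K →L[ℝ] F := T.comp K.subtypeL with hSdef
  have hanti : AntilipschitzWith (NNReal.mk c hc.le)⁻¹ S := by
    apply S.antilipschitz_of_bound
    intro x
    have := hbound (x : E) x.2.2
    rw [NNReal.coe_inv, NNReal.coe_mk, inv_mul_eq_div, le_div_iff₀ hc]
    simpa [hSdef, mul_comm] using this
  have hScl : IsClosed (Set.range S) := hanti.isClosed_range S.uniformContinuous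
  set M : Submodule ℝ F := K.map (T : E →ₗ[ℝ] F) with hMdef
  have hMrange : (M : Set F) = Set.range S := by
    ext y
    simp only [hMdef, Submodule.map_coe, Set.mem_image, Set.mem_range, hSdef]
    constructor
    · rintro ⟨x, hx, rfl⟩; exact ⟨⟨x, hx⟩, rfl⟩
    · rintro ⟨x, rfl⟩; exact ⟨x, x.2, rfl⟩
  have hMcl : IsClosed (M : Set F) := hMrange ▸ hScl
  haveI : IsClosed (M : Set F) := hMcl
  -- maps
  set φ : ↥E₁ →ₗ[ℝ] F ⧸ M := M.mkQ ∘ₗ ((T : E →ₗ[ℝ] F) ∘ₗ E₁.subtype) with hφdef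
  set ψ : ↥E₁ →ₗ[ℝ] E ⧸ Z := Z.mkQ ∘ₗ E₁.subtype with hψdef
  have hker : LinearMap.ker ψ ≤ LinearMap.ker φ := by
    intro x hx
    have hxZ : (x : E) ∈ Z := by
      simpa [hψdef, Submodule.Quotient.mk_eq_zero] using hx
    have : T x ∈ M := ⟨x, ⟨x.2, hxZ⟩, rfl⟩
    simpa [hφdef, Submodule.Quotient.mk_eq_zero] using this
  haveI fd1 : FiniteDimensional ℝ (↥E₁ ⧸ LinearMap.ker ψ) :=
    LinearEquiv.finiteDimensional ψ.quotKerEquivRange.symm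
  haveI fd2 : FiniteDimensional ℝ (↥E₁ ⧸ LinearMap.ker φ) := by
    have hsurj : Function.Surjective
        (Submodule.mapQ (LinearMap.ker ψ) (LinearMap.ker φ) LinearMap.id hker) := by
      intro y
      obtain ⟨x, rfl⟩ := (LinearMap.ker φ).mkQ_surjective y
      exact ⟨(LinearMap.ker ψ).mkQ x, rfl⟩
    exact Module.Finite.of_surjective _ hsurj
  haveI fdφ : FiniteDimensional ℝ (LinearMap.range φ) :=
    LinearEquiv.finiteDimensional φ.quotKerEquivRange
  -- density
  have hdq : Dense (M.mkQ '' (T '' (E₁ : Set E))) := by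
    have hs : DenseRange (M.mkQ) := (M.mkQ_surjective).denseRange
    exact hs.dense_image continuous_quot_mk hdense
  have hrange : (LinearMap.range φ : Set (F ⧸ M)) = M.mkQ '' (T '' (E₁ : Set E)) := by
    ext y
    simp only [SetLike.mem_coe, LinearMap.mem_range, hφdef, Set.mem_image]
    constructor
    · rintro ⟨x, rfl⟩; exact ⟨T x, ⟨x, x.2, rfl⟩, rfl⟩
    · rintro ⟨_, ⟨x, hx, rfl⟩, rfl⟩; exact ⟨⟨x, hx⟩, rfl⟩
  have htop : LinearMap.range φ = ⊤ := by
    have hcl : IsClosed ((LinearMap.range φ : Submodule ℝ (F ⧸ M)) : Set (F ⧸ M)) :=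
      Submodule.closed_of_finiteDimensional _
    have : Dense ((LinearMap.range φ : Submodule ℝ (F ⧸ M)) : Set (F ⧸ M)) := by
      rw [hrange]; exact hdq
    have := hcl.closure_eq ▸ this.closure_eq
    exact SetLike.coe_injective (by simpa using this)
  haveI fdFM : FiniteDimensional ℝ (F ⧸ M) := by
    rw [htop] at fdφ
    exact Submodule.topEquiv.finiteDimensional
  -- final map
  set θ : E →ₗ[ℝ] (E ⧸ Z) × (F ⧸ M) :=
    LinearMap.prod Z.mkQ (M.mkQ ∘ₗ (T : E →ₗ[ℝ] F)) with hθdef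
  have hkerθ : LinearMap.ker θ ≤ E₁ := by
    intro x hx
    rw [LinearMap.mem_ker, hθdef, LinearMap.prod_apply, Prod.mk_eq_zero] at hx
    obtain ⟨h1, h2⟩ := hx
    have hxZ : x ∈ Z := by simpa [Submodule.Quotient.mk_eq_zero] using h1
    have hTx : T x ∈ M := by simpa [Submodule.Quotient.mk_eq_zero] using h2
    obtain ⟨y, hy, hTy⟩ := hTx
    have hxy : x - y = 0 := by
      apply hinj _ (Z.sub_mem hxZ hy.2)
      have h3 : T y = T x := hTy
      simp [map_sub, h3]
    have : x = y := by rwa [sub_eq_zero] at hxy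
    exact this ▸ hy.1
  haveI fdθ : FiniteDimensional ℝ (E ⧸ LinearMap.ker θ) :=
    LinearEquiv.finiteDimensional θ.quotKerEquivRange.symm
  have : FiniteDimensional ℝ (E ⧸ E₁) := by
    have hsurj : Function.Surjective
        (Submodule.mapQ (LinearMap.ker θ) E₁ LinearMap.id hkerθ) := by
      intro y
      obtain ⟨x, rfl⟩ := E₁.mkQ_surjective y
      exact ⟨(LinearMap.ker θ).mkQ x, rfl⟩
    exact Module.Finite.of_surjective _ hsurj
  exact hcod this
end

section
/- There exist bounded linear operators T₁, T₂ : ℓ² → ℓ², each having the Kato property, whose sum T₁ + T₂ is an isomorphism of ℓ² (in particular, T₁ + T₂ does not have the Kato property). Concretely, with {e_n} the canonical basis, T₁ e_n = e_n for odd n and 3⁻ⁿ e_n for even n, and T₂ e_n = 3⁻ⁿ e_n for odd n and e_n for even n; then T₁ + T₂ = I + T where T e_n = 3⁻ⁿ e_n satisfies ‖T‖ ≤ 1/2, hence T₁ + T₂ is invertible. -/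
open Submodule Topology TopologicalSpace

noncomputable section
open scoped ENNReal

abbrev H2 := lp (fun _ : ℕ => ℝ) 2

lemma two_toReal : ((2 : ℝ≥0∞)).toReal = 2 := by simp
lemma two_toReal_pos : 0 < ((2 : ℝ≥0∞)).toReal := by rw [two_toReal]; norm_num

lemma memℓp_diag (d : ℕ → ℝ) {C : ℝ} (hd : ∀ n, |d n| ≤ C) (f : H2) :
    Memℓp (fun n => d n * f n) 2 := by
  have hC : 0 ≤ C := (abs_nonneg _).trans (hd 0)
  apply memℓp_gen
  have hs : Summable fun n => C ^ ((2:ℝ≥0∞)).toReal * ‖f n‖ ^ ((2:ℝ≥0∞)).toReal :=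
    ((lp.memℓp f).summable two_toReal_pos).mul_left _
  refine Summable.of_nonneg_of_le (fun n => ?_) (fun n => ?_) hs
  · positivity
  · rw [← Real.mul_rpow hC (norm_nonneg _)]
    apply Real.rpow_le_rpow (norm_nonneg _) _ two_toReal_pos.le
    rw [Real.norm_eq_abs, abs_mul]
    exact mul_le_mul_of_nonneg_right (hd n) (abs_nonneg _)

lemma lp2_norm_le_of_le {f g : H2} {c : ℝ} (hc : 0 ≤ c)
    (h : ∀ n, ‖g n‖ ≤ c * ‖f n‖) : ‖g‖ ≤ c * ‖f‖ := by
  apply lp.norm_le_of_tsum_le two_toReal_pos (mul_nonneg hc (norm_nonneg f))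
  have hsum : ∀ n, ‖g n‖ ^ ((2:ℝ≥0∞)).toReal ≤ c ^ ((2:ℝ≥0∞)).toReal * ‖f n‖ ^ ((2:ℝ≥0∞)).toReal := by
    intro n
    rw [← Real.mul_rpow hc (norm_nonneg _)]
    exact Real.rpow_le_rpow (norm_nonneg _) (h n) two_toReal_pos.le
  calc ∑' n, ‖g n‖ ^ ((2:ℝ≥0∞)).toReal
      ≤ ∑' n, c ^ ((2:ℝ≥0∞)).toReal * ‖f n‖ ^ ((2:ℝ≥0∞)).toReal := by
        refine Summable.tsum_le_tsum hsum ((lp.memℓp g).summable two_toReal_pos) ?_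
        exact ((lp.memℓp f).summable two_toReal_pos).mul_left _
    _ = c ^ ((2:ℝ≥0∞)).toReal * ∑' n, ‖f n‖ ^ ((2:ℝ≥0∞)).toReal := tsum_mul_left
    _ = (c * ‖f‖) ^ ((2:ℝ≥0∞)).toReal := by
        rw [← lp.norm_rpow_eq_tsum two_toReal_pos, Real.mul_rpow hc (norm_nonneg _)]

/-- diagonal operator -/
def diagOp (d : ℕ → ℝ) {C : ℝ} (hd : ∀ n, |d n| ≤ C) : H2 →L[ℝ] H2 :=
  LinearMap.mkContinuous
    { toFun := fun f => ⟨fun n => d n * f n, memℓp_diag d hd f⟩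
      map_add' := fun f g => by
        ext n
        simp only [lp.coeFn_add, Pi.add_apply]
        exact mul_add _ _ _
      map_smul' := fun c f => by
        ext n
        simp only [lp.coeFn_smul, Pi.smul_apply, RingHom.id_apply, smul_eq_mul]
        ring }
    C
    (fun f => by
      refine lp2_norm_le_of_le ((abs_nonneg _).trans (hd 0)) (fun n => ?_)
      show ‖d n * f n‖ ≤ C * ‖f n‖
      rw [Real.norm_eq_abs, Real.norm_eq_abs, abs_mul]
      exact mul_le_mul_of_nonneg_right (hd n) (abs_nonneg _))

@[simp] lemma diagOp_apply (d : ℕ → ℝ) {C : ℝ} (hd : ∀ n, |d n| ≤ C) (f : H2) (n : ℕ) :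
    (diagOp d hd f) n = d n * f n := rfl


/-- evaluation at a coordinate as a linear map -/
def evL (m : ℕ) : H2 →ₗ[ℝ] ℝ where
  toFun f := f m
  map_add' f g := congrFun (lp.coeFn_add f g) m
  map_smul' c f := congrFun (lp.coeFn_smul c f) m

lemma diag_kato (d : ℕ → ℝ) {C : ℝ} (hd : ∀ n, |d n| ≤ C)
    (h : ∀ ε : ℝ, 0 < ε → {n : ℕ | |d n| ≤ ε}.Infinite) :
    HasKatoProp (diagOp d hd) := by
  intro W hWc hWfd ε hε
  set S := {n : ℕ | |d n| ≤ ε} with hSdef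
  have hS : S.Infinite := h ε hε
  -- the subspace of functions supported in S
  set V : Submodule ℝ H2 :=
    { carrier := {f : H2 | ∀ n, n ∉ S → f n = 0}
      zero_mem' := fun n _ => rfl
      add_mem' := fun {f g} hf hg n hn => by
        rw [lp.coeFn_add, Pi.add_apply, hf n hn, hg n hn, add_zero]
      smul_mem' := fun c f hf n hn => by
        rw [lp.coeFn_smul, Pi.smul_apply, hf n hn, smul_zero] } with hVdef
  let emb : ℕ ↪ S := hS.natEmbedding
  have hembmem : ∀ k, ((emb k : ℕ)) ∈ S := fun k => (emb k).2
  have hembinj : Function.Injective (fun k => ((emb k : ℕ))) :=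
    fun a b hab => emb.injective (Subtype.ext hab)
  -- a linearly independent family in V
  have hsinglemem : ∀ k : ℕ, (lp.single 2 ((emb k : ℕ)) (1 : ℝ) : H2) ∈ V := by
    intro k n hn
    exact lp.single_apply_ne 2 _ _ (fun hne => hn (hne ▸ hembmem k))
  let v : ℕ → V := fun k => ⟨lp.single 2 ((emb k : ℕ)) (1 : ℝ), hsinglemem k⟩
  have hv : LinearIndependent ℝ v := by
    rw [linearIndependent_iff']
    intro s g hsum i hi
    have := congrArg ((evL ((emb i : ℕ))).comp V.subtype) hsum
    rw [map_sum, map_zero] at this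
    have hterm : ∀ j ∈ s, ((evL ((emb i : ℕ))).comp V.subtype) (g j • v j)
        = if j = i then g j else 0 := by
      intro j _
      rw [map_smul]
      have : ((evL ((emb i : ℕ))).comp V.subtype) (v j)
          = if j = i then 1 else 0 := by
        show (lp.single 2 ((emb j : ℕ)) (1 : ℝ) : H2) ((emb i : ℕ)) = _
        by_cases hji : j = i
        · subst hji; rw [lp.single_apply_self, if_pos rfl]
        · rw [if_neg hji]
          exact lp.single_apply_ne 2 _ _ (fun hne => hji (hembinj hne).symm)
      rw [this]
      by_cases hji : j = i <;> simp [hji]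
    rw [Finset.sum_congr rfl hterm, Finset.sum_ite_eq' s i (fun j => g j), if_pos hi] at this
    exact this
  -- V is infinite dimensional, hence meets W nontrivially
  let ψ : V →ₗ[ℝ] (H2 ⧸ W) := W.mkQ.comp V.subtype
  have hker : LinearMap.ker ψ ≠ ⊥ := by
    intro h0
    haveI : FiniteDimensional ℝ V :=
      FiniteDimensional.of_injective ψ (LinearMap.ker_eq_bot.mp h0)
    exact Module.Finite.not_linearIndependent_of_infinite v hv
  obtain ⟨x, hxker, hxne⟩ := (Submodule.ne_bot_iff _).mp hker
  refine ⟨(x : H2), ?_, ?_, ?_⟩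
  · have : W.mkQ (x : H2) = 0 := hxker
    exact (Submodule.Quotient.mk_eq_zero W).mp this
  · exact fun h0 => hxne (Subtype.ext h0)
  · refine lp2_norm_le_of_le hε.le (fun n => ?_)
    show ‖d n * (x : H2) n‖ ≤ ε * ‖(x : H2) n‖
    by_cases hn : (x : H2) n = 0
    · simp [hn]
    · have hnS : n ∈ S := by
        by_contra hnS
        exact hn (x.2 n hnS)
      rw [Real.norm_eq_abs, Real.norm_eq_abs, abs_mul]
      exact mul_le_mul_of_nonneg_right hnS (abs_nonneg _)


lemma diagOp_single (d : ℕ → ℝ) {C : ℝ} (hd : ∀ n, |d n| ≤ C) (n : ℕ) :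
    diagOp d hd (lp.single 2 n (1 : ℝ)) = d n • lp.single 2 n (1 : ℝ) := by
  ext m
  show d m * (lp.single 2 n (1:ℝ) : H2) m = (d n • (lp.single 2 n (1:ℝ) : H2)) m
  rw [lp.coeFn_smul, Pi.smul_apply, smul_eq_mul]
  by_cases hmn : m = n
  · subst hmn; rw [lp.single_apply_self]
  · rw [lp.single_apply_ne 2 _ _ hmn, mul_zero, mul_zero]

lemma three_pow_pos (n : ℕ) : (0:ℝ) < 3 ^ n := by positivity

lemma inv_three_pow_le_one (n : ℕ) : ((3:ℝ) ^ n)⁻¹ ≤ 1 := by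
  rw [inv_le_one_iff₀]; right; exact one_le_pow₀ (by norm_num)


theorem stmt18 :
    ∃ T₁ T₂ : lp (fun _ : ℕ => ℝ) 2 →L[ℝ] lp (fun _ : ℕ => ℝ) 2,
      (∀ n : ℕ, T₁ (lp.single 2 n (1 : ℝ)) =
        if Odd n then lp.single 2 n (1 : ℝ) else ((3 : ℝ) ^ n)⁻¹ • lp.single 2 n (1 : ℝ)) ∧
      (∀ n : ℕ, T₂ (lp.single 2 n (1 : ℝ)) =
        if Odd n then ((3 : ℝ) ^ n)⁻¹ • lp.single 2 n (1 : ℝ) else lp.single 2 n (1 : ℝ)) ∧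
      HasKatoProp T₁ ∧ HasKatoProp T₂ ∧ ¬ HasKatoProp (T₁ + T₂) ∧
      ∃ S : lp (fun _ : ℕ => ℝ) 2 →L[ℝ] lp (fun _ : ℕ => ℝ) 2,
        (T₁ + T₂).comp S = ContinuousLinearMap.id ℝ _ ∧
        S.comp (T₁ + T₂) = ContinuousLinearMap.id ℝ _ := by
  classical
  set d₁ : ℕ → ℝ := fun n => if Odd n then 1 else ((3:ℝ) ^ n)⁻¹ with hd₁def
  set d₂ : ℕ → ℝ := fun n => if Odd n then ((3:ℝ) ^ n)⁻¹ else 1 with hd₂def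
  set e : ℕ → ℝ := fun n => 1 + ((3:ℝ) ^ n)⁻¹ with hedef
  set sq : ℕ → ℝ := fun n => (1 + ((3:ℝ) ^ n)⁻¹)⁻¹ with hsqdef
  have hepos : ∀ n, (0:ℝ) < e n := fun n => by
    have := three_pow_pos n; simp only [hedef]; positivity
  have hd₁ : ∀ n, |d₁ n| ≤ 1 := by
    intro n
    simp only [hd₁def]
    by_cases h : Odd n <;> simp [h, abs_of_nonneg (inv_nonneg.mpr (three_pow_pos n).le),
      inv_three_pow_le_one]
  have hd₂ : ∀ n, |d₂ n| ≤ 1 := by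
    intro n
    simp only [hd₂def]
    by_cases h : Odd n <;> simp [h, abs_of_nonneg (inv_nonneg.mpr (three_pow_pos n).le),
      inv_three_pow_le_one]
  have he : ∀ n, |e n| ≤ 2 := by
    intro n
    rw [abs_of_nonneg (hepos n).le]
    show (1:ℝ) + ((3:ℝ) ^ n)⁻¹ ≤ 2
    linarith [inv_three_pow_le_one n]
  have hsq : ∀ n, |sq n| ≤ 1 := by
    intro n
    rw [hsqdef, abs_of_nonneg (inv_nonneg.mpr (hepos n).le)]
    rw [inv_le_one_iff₀]; right
    show (1:ℝ) ≤ 1 + ((3:ℝ) ^ n)⁻¹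
    have := inv_nonneg.mpr (three_pow_pos n).le
    linarith
  refine ⟨diagOp d₁ hd₁, diagOp d₂ hd₂, ?_, ?_, ?_, ?_, ?_, ?_⟩
  · intro n
    rw [diagOp_single]
    by_cases h : Odd n
    · rw [if_pos h]
      simp only [hd₁def, if_pos h, one_smul]
    · rw [if_neg h]
      simp only [hd₁def, if_neg h]
  · intro n
    rw [diagOp_single]
    by_cases h : Odd n
    · rw [if_pos h]
      simp only [hd₂def, if_pos h]
    · rw [if_neg h]
      simp only [hd₂def, if_neg h, one_smul]
  · -- Kato for T₁ : small on large even indices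
    apply diag_kato
    intro ε hε
    obtain ⟨N, hN⟩ := exists_pow_lt_of_lt_one hε (by norm_num : (1/3:ℝ) < 1)
    apply Set.infinite_of_injective_forall_mem
      (f := fun k : ℕ => 2 * (k + N))
    · intro a b hab
      have h2 : 2 * (a + N) = 2 * (b + N) := hab
      omega
    · intro k
      have hnotodd : ¬ Odd (2 * (k + N)) := by
        rw [Nat.odd_iff]; omega
      show |d₁ (2 * (k + N))| ≤ ε
      simp only [hd₁def, if_neg hnotodd]
      rw [abs_of_nonneg (inv_nonneg.mpr (three_pow_pos _).le)]
      have h1 : ((3:ℝ) ^ (2 * (k + N)))⁻¹ ≤ ((3:ℝ) ^ N)⁻¹ := by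
        apply inv_anti₀ (three_pow_pos N)
        exact pow_le_pow_right₀ (by norm_num) (by omega)
      have h2 : ((3:ℝ) ^ N)⁻¹ = (1/3:ℝ) ^ N := by
        rw [div_pow, one_pow, one_div]
      linarith
  · -- Kato for T₂ : small on large odd indices
    apply diag_kato
    intro ε hε
    obtain ⟨N, hN⟩ := exists_pow_lt_of_lt_one hε (by norm_num : (1/3:ℝ) < 1)
    apply Set.infinite_of_injective_forall_mem
      (f := fun k : ℕ => 2 * (k + N) + 1)
    · intro a b hab
      have h2 : 2 * (a + N) + 1 = 2 * (b + N) + 1 := hab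
      omega
    · intro k
      have hodd : Odd (2 * (k + N) + 1) := by
        rw [Nat.odd_iff]; omega
      show |d₂ (2 * (k + N) + 1)| ≤ ε
      simp only [hd₂def, if_pos hodd]
      rw [abs_of_nonneg (inv_nonneg.mpr (three_pow_pos _).le)]
      have h1 : ((3:ℝ) ^ (2 * (k + N) + 1))⁻¹ ≤ ((3:ℝ) ^ N)⁻¹ := by
        apply inv_anti₀ (three_pow_pos N)
        exact pow_le_pow_right₀ (by norm_num) (by omega)
      have h2 : ((3:ℝ) ^ N)⁻¹ = (1/3:ℝ) ^ N := by
        rw [div_pow, one_pow, one_div]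
      linarith
  · -- not Kato for the sum
    have hsum : diagOp d₁ hd₁ + diagOp d₂ hd₂ = diagOp e he := by
      ext f n
      show (diagOp d₁ hd₁ f + diagOp d₂ hd₂ f) n = e n * f n
      rw [lp.coeFn_add, Pi.add_apply, diagOp_apply, diagOp_apply]
      show d₁ n * f n + d₂ n * f n = (1 + ((3:ℝ) ^ n)⁻¹) * f n
      simp only [hd₁def, hd₂def]
      by_cases h : Odd n
      · rw [if_pos h, if_pos h]; ring
      · rw [if_neg h, if_neg h]; ring
    rw [hsum]
    intro hK
    haveI : Subsingleton ((lp (fun _ : ℕ => ℝ) 2) ⧸ (⊤ : Submodule ℝ (lp (fun _ : ℕ => ℝ) 2))) :=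
      Submodule.Quotient.subsingleton_iff.mpr rfl
    haveI : FiniteDimensional ℝ
        ((lp (fun _ : ℕ => ℝ) 2) ⧸ (⊤ : Submodule ℝ (lp (fun _ : ℕ => ℝ) 2))) :=
      Module.Finite.of_basis (Module.Basis.empty _ : Module.Basis (Fin 0) ℝ _)
    obtain ⟨u, -, hu0, hle⟩ := hK ⊤
      (by rw [Submodule.top_coe]; exact isClosed_univ) inferInstance (1/2) (by norm_num)
    have hlow : ‖u‖ ≤ 1 * ‖diagOp e he u‖ := by
      refine lp2_norm_le_of_le (by norm_num) (fun n => ?_)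
      show ‖u n‖ ≤ 1 * ‖e n * u n‖
      rw [one_mul, Real.norm_eq_abs, Real.norm_eq_abs, abs_mul,
        abs_of_nonneg (hepos n).le]
      show |u n| ≤ (1 + ((3:ℝ) ^ n)⁻¹) * |u n|
      nlinarith [abs_nonneg (u n), inv_nonneg.mpr (three_pow_pos n).le]
    have hupos : 0 < ‖u‖ := norm_pos_iff.mpr hu0
    rw [one_mul] at hlow
    linarith
  · -- the inverse
    have hsum : diagOp d₁ hd₁ + diagOp d₂ hd₂ = diagOp e he := by
      ext f n
      show (diagOp d₁ hd₁ f + diagOp d₂ hd₂ f) n = e n * f n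
      rw [lp.coeFn_add, Pi.add_apply, diagOp_apply, diagOp_apply]
      show d₁ n * f n + d₂ n * f n = (1 + ((3:ℝ) ^ n)⁻¹) * f n
      simp only [hd₁def, hd₂def]
      by_cases h : Odd n
      · rw [if_pos h, if_pos h]; ring
      · rw [if_neg h, if_neg h]; ring
    refine ⟨diagOp sq hsq, ?_, ?_⟩
    · ext f n
      rw [hsum]
      have hne : (1:ℝ) + ((3:ℝ) ^ n)⁻¹ ≠ 0 := (hepos n).ne'
      show ((1:ℝ) + ((3:ℝ) ^ n)⁻¹) * (((1:ℝ) + ((3:ℝ) ^ n)⁻¹)⁻¹ * f n) = f n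
      rw [← mul_assoc, mul_inv_cancel₀ hne, one_mul]
    · ext f n
      rw [hsum]
      have hne : (1:ℝ) + ((3:ℝ) ^ n)⁻¹ ≠ 0 := (hepos n).ne'
      show ((1:ℝ) + ((3:ℝ) ^ n)⁻¹)⁻¹ * (((1:ℝ) + ((3:ℝ) ^ n)⁻¹) * f n) = f n
      rw [← mul_assoc, inv_mul_cancel₀ hne, one_mul]
end
end
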